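/- Assume (H). Then the drift coefficient b and the diffusion matrix a are bounded and globally Lipschitz on ℝ^d (a with respect to any fixed matrix norm). -/

import Mathlib

open MeasureTheory Real Set
open scoped RealInnerProductSpace ENNReal NNReal

noncomputable section

abbrev Euc (d : ℕ) := EuclideanSpace ℝ (Fin d)

variable {d : ℕ}

/-- gradient of `g` with respect to its first variable -/
def grad1 (g : Euc d → Euc d → ℝ) (y x : Euc d) : Euc d :=
  gradient (fun z => g z x) y

/-- Hessian of `g` with respect to its first variable, as a continuous bilinear map -/
def hess11 (g : Euc d → Euc d → ℝ) (y x : Euc d) : Euc d →L[ℝ] Euc d →L[ℝ] ℝ :=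
  fderiv ℝ (fderiv ℝ (fun z => g z x)) y

/-- set of evolutionary singularities -/
def Gam (g : Euc d → Euc d → ℝ) : Set (Euc d) := {x | grad1 g x x = 0}

def GamAlpha (g : Euc d → Euc d → ℝ) (α : ℝ) : Set (Euc d) :=
  {x | α ≤ Metric.infDist x (Gam g) ∧ ‖x‖ ≤ 1 / α}

/-- `p` is a measurable symmetric probability-density kernel -/
def IsMutKernel (p : Euc d → Euc d → ℝ) : Prop :=
  Measurable (Function.uncurry p) ∧
  (∀ x h, 0 ≤ p x h) ∧
  (∀ x, Integrable (fun h => p x h)) ∧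
  (∀ x, (∫ h, p x h) = 1) ∧
  (∀ x h, p x (-h) = p x h)

/-- Assumption (H2) -/
def H2 (p : Euc d → Euc d → ℝ) : Prop :=
  (∀ x, Integrable (fun h : Euc d => ‖h‖ ^ 3 * p x h)) ∧
  (∃ M : ℝ, ∀ x, (∫ h : Euc d, ‖h‖ ^ 3 * p x h) ≤ M) ∧
  ∃ m : ℝ → ℝ, Measurable m ∧ (∀ r, 0 ≤ m r) ∧
    Integrable (fun h : Euc d => (‖h‖ ^ 2 ⊔ ‖h‖ ^ 3) * m ‖h‖) ∧
    (∀ x y h, |p x h - p y h| ≤ ‖x - y‖ * m ‖h‖) ∧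
    (∀ x h, p x h ≤ m ‖h‖)

/-- Assumption (H1) -/
def H1 (g : Euc d → Euc d → ℝ) : Prop :=
  (∀ x : Euc d, ContDiff ℝ 2 (fun z => g z x)) ∧
  (∃ C : ℝ, ∀ y x : Euc d, ‖grad1 g y x‖ ≤ C) ∧
  (∃ K : ℝ≥0, LipschitzWith K (fun q : Euc d × Euc d => grad1 g q.1 q.2)) ∧
  (∃ C : ℝ, ∀ y x : Euc d, ‖hess11 g y x‖ ≤ C) ∧
  (∃ K : ℝ≥0, LipschitzWith K (fun q : Euc d × Euc d => hess11 g q.1 q.2))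

/-- drift coefficient b -/
def bCoeff (g p : Euc d → Euc d → ℝ) (x : Euc d) : Euc d :=
  (WithLp.equiv 2 (Fin d → ℝ)).symm fun k =>
    ∫ h : Euc d, h k * max (⟪grad1 g x x, h⟫) 0 * p x h

/-- diffusion matrix a -/
def aMat (g p : Euc d → Euc d → ℝ) (x : Euc d) : Matrix (Fin d) (Fin d) ℝ :=
  Matrix.of fun k l => ∫ h : Euc d, h k * h l * max (⟪h, grad1 g x x⟫) 0 * p x h

/-- second-order drift coefficient b-tilde -/
def btCoeff (g p : Euc d → Euc d → ℝ) (x : Euc d) : Euc d :=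
  (WithLp.equiv 2 (Fin d → ℝ)).symm fun k =>
    (1 / 2) * ∫ h in {h : Euc d | 0 < ⟪h, grad1 g x x⟫},
      h k * hess11 g x x h h * p x h

/-- quadratic form sᵀ a(x) s -/
def quadA (g p : Euc d → Euc d → ℝ) (x s : Euc d) : ℝ :=
  ∑ k, ∑ l, s k * aMat g p x k l * s l

/-- quadratic form sᵀ a(x)⁻¹ s -/
def quadAInv (g p : Euc d → Euc d → ℝ) (x s : Euc d) : ℝ :=
  ∑ k, ∑ l, s k * (aMat g p x)⁻¹ k l * s l

/-- full Hessian of `g` (as a function on the product space) at `(y,x)` -/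
def hessF (g : Euc d → Euc d → ℝ) (y x : Euc d) :
    (Euc d × Euc d) →L[ℝ] (Euc d × Euc d) →L[ℝ] ℝ :=
  fderiv ℝ (fderiv ℝ (fun q : Euc d × Euc d => g q.1 q.2)) (y, x)

/-- action of a matrix on a vector of `Euc d` -/
def mulVecE (M : Matrix (Fin d) (Fin d) ℝ) (v : Euc d) : Euc d :=
  (WithLp.equiv 2 (Fin d → ℝ)).symm (M.mulVec (WithLp.equiv 2 (Fin d → ℝ) v))


/-- dominating function -/
def MM (d : ℕ) (m : ℝ → ℝ) : Euc d → ℝ := fun h => (‖h‖ ^ 2 ⊔ ‖h‖ ^ 3) * m ‖h‖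

lemma MM_nonneg {d : ℕ} (m : ℝ → ℝ) (hm : ∀ r, 0 ≤ m r) (h : Euc d) : 0 ≤ MM d m h :=
  mul_nonneg (le_trans (sq_nonneg _) (le_max_left _ _)) (hm _)

lemma coord_abs_le {d : ℕ} (h : Euc d) (k : Fin d) : |h k| ≤ ‖h‖ := by
  rw [EuclideanSpace.norm_eq]
  rw [show |h k| = Real.sqrt (|h k| ^ 2) from (Real.sqrt_sq (abs_nonneg _)).symm]
  apply Real.sqrt_le_sqrt
  rw [sq_abs]
  have := Finset.single_le_sum (f := fun i => ‖h i‖ ^ 2) (fun i _ => sq_nonneg _)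
    (Finset.mem_univ k)
  simpa [Real.norm_eq_abs, sq_abs] using this

lemma norm_le_of_coord {d : ℕ} (v : Euc d) (c : ℝ) (hc : 0 ≤ c) (hv : ∀ k, |v k| ≤ c) :
    ‖v‖ ≤ Real.sqrt d * c := by
  rw [EuclideanSpace.norm_eq]
  have hs : ∑ i, ‖v i‖ ^ 2 ≤ (d : ℝ) * c ^ 2 := by
    calc ∑ i, ‖v i‖ ^ 2 ≤ ∑ _i : Fin d, c ^ 2 :=
          Finset.sum_le_sum fun i _ => by
            rw [Real.norm_eq_abs]
            exact pow_le_pow_left₀ (abs_nonneg _) (hv i) 2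
      _ = (d : ℝ) * c ^ 2 := by simp [Finset.sum_const, Finset.card_univ]
  calc Real.sqrt (∑ i, ‖v i‖ ^ 2) ≤ Real.sqrt ((d : ℝ) * c ^ 2) := Real.sqrt_le_sqrt hs
    _ = Real.sqrt d * c := by
        rw [Real.sqrt_mul (by positivity), Real.sqrt_sq hc]

lemma aux_ptbound {d : ℕ} (m : ℝ → ℝ) (hm0 : ∀ r, 0 ≤ m r)
    (G : Euc d) (Cg : ℝ) (hG : ‖G‖ ≤ Cg)
    (q : Euc d → ℝ) (hq0 : ∀ h, 0 ≤ q h) (hqm : ∀ h, q h ≤ m ‖h‖)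
    (w : Euc d → ℝ) (hwb : ∀ h : Euc d, |w h| * ‖h‖ ≤ ‖h‖ ^ 2 ⊔ ‖h‖ ^ 3)
    (h : Euc d) : |w h * max ⟪G, h⟫ 0 * q h| ≤ Cg * MM d m h := by
  have hCg0 : 0 ≤ Cg := le_trans (norm_nonneg _) hG
  have h1 : |max ⟪G, h⟫ 0| ≤ Cg * ‖h‖ := by
    rw [abs_of_nonneg (le_max_right _ _)]
    exact max_le (le_trans (real_inner_le_norm G h)
      (mul_le_mul_of_nonneg_right hG (norm_nonneg h)))
      (mul_nonneg hCg0 (norm_nonneg h))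
  calc |w h * max ⟪G, h⟫ 0 * q h| = |w h| * |max ⟪G, h⟫ 0| * |q h| := by
        rw [abs_mul, abs_mul]
    _ ≤ |w h| * (Cg * ‖h‖) * m ‖h‖ := by
        apply mul_le_mul (mul_le_mul_of_nonneg_left h1 (abs_nonneg _))
          (by rw [abs_of_nonneg (hq0 h)]; exact hqm h) (abs_nonneg _) (by positivity)
    _ = Cg * (|w h| * ‖h‖) * m ‖h‖ := by ring
    _ ≤ Cg * (‖h‖ ^ 2 ⊔ ‖h‖ ^ 3) * m ‖h‖ :=
        mul_le_mul_of_nonneg_right (mul_le_mul_of_nonneg_left (hwb h) hCg0) (hm0 _)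
    _ = Cg * MM d m h := by rw [MM]; ring

lemma aux_integrable {d : ℕ} (m : ℝ → ℝ) (hm0 : ∀ r, 0 ≤ m r)
    (hmint : Integrable (MM d m))
    (G : Euc d) (Cg : ℝ) (hG : ‖G‖ ≤ Cg)
    (q : Euc d → ℝ) (hq : Measurable q) (hq0 : ∀ h, 0 ≤ q h) (hqm : ∀ h, q h ≤ m ‖h‖)
    (w : Euc d → ℝ) (hw : Measurable w) (hwb : ∀ h : Euc d, |w h| * ‖h‖ ≤ ‖h‖ ^ 2 ⊔ ‖h‖ ^ 3) :
    Integrable (fun h => w h * max ⟪G, h⟫ 0 * q h) := by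
  refine (hmint.const_mul Cg).mono' ?_ ?_
  · exact ((hw.mul (((continuous_const.inner continuous_id).measurable).max
      measurable_const)).mul hq).aestronglyMeasurable
  · exact Filter.Eventually.of_forall fun h => by
      rw [Real.norm_eq_abs]
      exact aux_ptbound m hm0 G Cg hG q hq0 hqm w hwb h

lemma aux_bound {d : ℕ} (m : ℝ → ℝ) (hm0 : ∀ r, 0 ≤ m r)
    (hmint : Integrable (MM d m))
    (G : Euc d) (Cg : ℝ) (hG : ‖G‖ ≤ Cg)
    (q : Euc d → ℝ) (hq : Measurable q) (hq0 : ∀ h, 0 ≤ q h) (hqm : ∀ h, q h ≤ m ‖h‖)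
    (w : Euc d → ℝ) (hw : Measurable w) (hwb : ∀ h : Euc d, |w h| * ‖h‖ ≤ ‖h‖ ^ 2 ⊔ ‖h‖ ^ 3) :
    |∫ h, w h * max ⟪G, h⟫ 0 * q h| ≤ Cg * ∫ h, MM d m h := by
  have := norm_integral_le_of_norm_le (hmint.const_mul Cg)
    (Filter.Eventually.of_forall fun h => by
      rw [Real.norm_eq_abs]
      exact aux_ptbound m hm0 G Cg hG q hq0 hqm w hwb h)
  rwa [Real.norm_eq_abs, integral_const_mul] at this

lemma aux_lip {d : ℕ} (m : ℝ → ℝ) (hm0 : ∀ r, 0 ≤ m r)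
    (hmint : Integrable (MM d m))
    (G G' : Euc d) (Cg : ℝ) (hG : ‖G‖ ≤ Cg) (hG' : ‖G'‖ ≤ Cg)
    (D : ℝ) (hD : ‖G - G'‖ ≤ D)
    (q q' : Euc d → ℝ) (hq : Measurable q) (hq' : Measurable q')
    (hq0 : ∀ h, 0 ≤ q h) (hq0' : ∀ h, 0 ≤ q' h)
    (hqm : ∀ h, q h ≤ m ‖h‖) (hqm' : ∀ h, q' h ≤ m ‖h‖)
    (δ : ℝ) (hδ : 0 ≤ δ) (hqq : ∀ h, |q h - q' h| ≤ δ * m ‖h‖)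
    (w : Euc d → ℝ) (hw : Measurable w) (hwb : ∀ h : Euc d, |w h| * ‖h‖ ≤ ‖h‖ ^ 2 ⊔ ‖h‖ ^ 3) :
    |(∫ h, w h * max ⟪G, h⟫ 0 * q h) - ∫ h, w h * max ⟪G', h⟫ 0 * q' h| ≤
      (D + Cg * δ) * ∫ h, MM d m h := by
  have hCg0 : 0 ≤ Cg := le_trans (norm_nonneg _) hG
  have hD0 : 0 ≤ D := le_trans (norm_nonneg _) hD
  have hint1 := aux_integrable m hm0 hmint G Cg hG q hq hq0 hqm w hw hwb
  have hint2 := aux_integrable m hm0 hmint G' Cg hG' q' hq' hq0' hqm' w hw hwb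
  have key : ∀ h : Euc d,
      |w h * max ⟪G, h⟫ 0 * q h - w h * max ⟪G', h⟫ 0 * q' h| ≤ (D + Cg * δ) * MM d m h := by
    intro h
    have e1 : |max ⟪G, h⟫ 0 - max ⟪G', h⟫ 0| ≤ D * ‖h‖ := by
      calc |max ⟪G, h⟫ 0 - max ⟪G', h⟫ 0| ≤ |⟪G, h⟫ - ⟪G', h⟫| := abs_max_sub_max_le_abs _ _ _
        _ = |⟪G - G', h⟫| := by rw [inner_sub_left]
        _ ≤ ‖G - G'‖ * ‖h‖ := abs_real_inner_le_norm _ _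
        _ ≤ D * ‖h‖ := mul_le_mul_of_nonneg_right hD (norm_nonneg _)
    have e2 : |max ⟪G', h⟫ 0| ≤ Cg * ‖h‖ := by
      rw [abs_of_nonneg (le_max_right _ _)]
      exact max_le (le_trans (real_inner_le_norm G' h)
        (mul_le_mul_of_nonneg_right hG' (norm_nonneg h)))
        (mul_nonneg hCg0 (norm_nonneg h))
    have keyin : |max ⟪G, h⟫ 0 * q h - max ⟪G', h⟫ 0 * q' h| ≤
        (D + Cg * δ) * (‖h‖ * m ‖h‖) := by
      calc |max ⟪G, h⟫ 0 * q h - max ⟪G', h⟫ 0 * q' h|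
          = |(max ⟪G, h⟫ 0 - max ⟪G', h⟫ 0) * q h + max ⟪G', h⟫ 0 * (q h - q' h)| := by
            ring_nf
        _ ≤ |(max ⟪G, h⟫ 0 - max ⟪G', h⟫ 0) * q h| + |max ⟪G', h⟫ 0 * (q h - q' h)| :=
            abs_add_le _ _
        _ = |max ⟪G, h⟫ 0 - max ⟪G', h⟫ 0| * |q h| + |max ⟪G', h⟫ 0| * |q h - q' h| := by
            rw [abs_mul, abs_mul]
        _ ≤ (D * ‖h‖) * m ‖h‖ + (Cg * ‖h‖) * (δ * m ‖h‖) := by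
            apply add_le_add
            · exact mul_le_mul e1 (by rw [abs_of_nonneg (hq0 h)]; exact hqm h)
                (abs_nonneg _) (by positivity)
            · exact mul_le_mul e2 (hqq h) (abs_nonneg _) (by positivity)
        _ = (D + Cg * δ) * (‖h‖ * m ‖h‖) := by ring
    calc |w h * max ⟪G, h⟫ 0 * q h - w h * max ⟪G', h⟫ 0 * q' h|
        = |w h| * |max ⟪G, h⟫ 0 * q h - max ⟪G', h⟫ 0 * q' h| := by
          rw [← abs_mul]; congr 1; ring
      _ ≤ |w h| * ((D + Cg * δ) * (‖h‖ * m ‖h‖)) :=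
          mul_le_mul_of_nonneg_left keyin (abs_nonneg _)
      _ = (D + Cg * δ) * ((|w h| * ‖h‖) * m ‖h‖) := by ring
      _ ≤ (D + Cg * δ) * ((‖h‖ ^ 2 ⊔ ‖h‖ ^ 3) * m ‖h‖) := by
          apply mul_le_mul_of_nonneg_left _ (by positivity)
          exact mul_le_mul_of_nonneg_right (hwb h) (hm0 _)
      _ = (D + Cg * δ) * MM d m h := rfl
  rw [← integral_sub hint1 hint2]
  have := norm_integral_le_of_norm_le (hmint.const_mul (D + Cg * δ))
    (Filter.Eventually.of_forall fun h => by rw [Real.norm_eq_abs]; exact key h)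
  rwa [Real.norm_eq_abs, integral_const_mul] at this

theorem stmt2 {d : ℕ} (hd : 1 ≤ d) (g p : Euc d → Euc d → ℝ)
    (hker : IsMutKernel p) (hH1 : H1 g) (hH2 : H2 p) :
    ((∃ C : ℝ, ∀ x : Euc d, ‖bCoeff g p x‖ ≤ C) ∧
      (∃ L : ℝ≥0, LipschitzWith L (bCoeff g p))) ∧
    ((∃ C : ℝ, ∀ (x : Euc d) (k l : Fin d), |aMat g p x k l| ≤ C) ∧
      (∃ L : ℝ, 0 ≤ L ∧ ∀ (x y : Euc d) (k l : Fin d),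
        |aMat g p x k l - aMat g p y k l| ≤ L * ‖x - y‖)) := by
  obtain ⟨pmeas, ppos, pint, pone, psymm⟩ := hker
  obtain ⟨h3int, hM3, m, mmeas, m0, mint, mlipp, mbd⟩ := hH2
  obtain ⟨hg2, ⟨Cg, hCg⟩, ⟨Kg, hKg⟩, -, -⟩ := hH1
  have hCg0 : 0 ≤ Cg := le_trans (norm_nonneg _) (hCg 0 0)
  have hmint : Integrable (MM d m) := mint
  have hqmeas : ∀ x : Euc d, Measurable (fun h => p x h) :=
    fun x => pmeas.comp measurable_prodMk_left
  set I := ∫ h, MM d m h with hIdef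
  have hI0 : 0 ≤ I := integral_nonneg (MM_nonneg m m0)
  have hGlip : ∀ x y : Euc d, ‖grad1 g x x - grad1 g y y‖ ≤ (Kg : ℝ) * ‖x - y‖ := by
    intro x y
    have h := hKg.dist_le_mul (x, x) (y, y)
    simp only [dist_eq_norm, Prod.mk_sub_mk, Prod.norm_def, Prod.fst, Prod.snd, max_self] at h
    exact h
  -- weight functions
  have hwb_b : ∀ (k : Fin d) (h : Euc d), |h k| * ‖h‖ ≤ ‖h‖ ^ 2 ⊔ ‖h‖ ^ 3 := by
    intro k h
    calc |h k| * ‖h‖ ≤ ‖h‖ * ‖h‖ := mul_le_mul_of_nonneg_right (coord_abs_le h k) (norm_nonneg h)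
      _ = ‖h‖ ^ 2 := (sq ‖h‖).symm
      _ ≤ _ := le_max_left _ _
  have hwb_a : ∀ (k l : Fin d) (h : Euc d), |h k * h l| * ‖h‖ ≤ ‖h‖ ^ 2 ⊔ ‖h‖ ^ 3 := by
    intro k l h
    calc |h k * h l| * ‖h‖ ≤ (‖h‖ * ‖h‖) * ‖h‖ := by
          rw [abs_mul]
          apply mul_le_mul_of_nonneg_right _ (norm_nonneg h)
          exact mul_le_mul (coord_abs_le h k) (coord_abs_le h l) (abs_nonneg _) (norm_nonneg h)
      _ = ‖h‖ ^ 3 := by ring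
      _ ≤ _ := le_max_right _ _
  have hwmeas_b : ∀ k : Fin d, Measurable (fun h : Euc d => h k) :=
    fun k => (measurable_pi_apply k).comp (WithLp.measurable_ofLp (p := 2) (X := Fin d → ℝ))
  have hwmeas_a : ∀ k l : Fin d, Measurable (fun h : Euc d => h k * h l) :=
    fun k l => (hwmeas_b k).mul (hwmeas_b l)
  -- component formulas
  have hbk : ∀ (x : Euc d) (k : Fin d),
      bCoeff g p x k = ∫ h : Euc d, h k * max ⟪grad1 g x x, h⟫ 0 * p x h := fun x k => rfl
  have hakl : ∀ (x : Euc d) (k l : Fin d),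
      aMat g p x k l = ∫ h : Euc d, (h k * h l) * max ⟪grad1 g x x, h⟫ 0 * p x h := by
    intro x k l
    show (∫ h : Euc d, h k * h l * max ⟪h, grad1 g x x⟫ 0 * p x h) = _
    congr 1
    ext h
    rw [real_inner_comm]
  refine ⟨⟨⟨Real.sqrt d * (Cg * I), ?_⟩, ?_⟩, ⟨Cg * I, ?_⟩, ((Kg : ℝ) + Cg) * I, ?_, ?_⟩
  · -- bound on b
    intro x
    apply norm_le_of_coord _ _ (by positivity)
    intro k
    rw [hbk]
    exact aux_bound m m0 hmint _ Cg (hCg x x) _ (hqmeas x) (ppos x) (mbd x) _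
      (hwmeas_b k) (hwb_b k)
  · -- Lipschitz of b
    refine ⟨Real.toNNReal (Real.sqrt d * (((Kg : ℝ) + Cg) * I)), ?_⟩
    apply LipschitzWith.of_dist_le_mul
    intro x y
    rw [dist_eq_norm, dist_eq_norm]
    have hco : ∀ k : Fin d, |(bCoeff g p x - bCoeff g p y) k| ≤
        (((Kg : ℝ) + Cg) * I) * ‖x - y‖ := by
      intro k
      have : (bCoeff g p x - bCoeff g p y) k = bCoeff g p x k - bCoeff g p y k := rfl
      rw [this, hbk, hbk]
      have := aux_lip m m0 hmint (grad1 g x x) (grad1 g y y) Cg (hCg x x) (hCg y y)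
        ((Kg : ℝ) * ‖x - y‖) (hGlip x y) (fun h => p x h) (fun h => p y h)
        (hqmeas x) (hqmeas y) (ppos x) (ppos y) (mbd x) (mbd y)
        (‖x - y‖) (norm_nonneg _) (fun h => mlipp x y h) _ (hwmeas_b k) (hwb_b k)
      calc |(∫ h : Euc d, h k * max ⟪grad1 g x x, h⟫ 0 * p x h) -
            ∫ h : Euc d, h k * max ⟪grad1 g y y, h⟫ 0 * p y h|
          ≤ ((Kg : ℝ) * ‖x - y‖ + Cg * ‖x - y‖) * I := this
        _ = (((Kg : ℝ) + Cg) * I) * ‖x - y‖ := by ring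
    have h1 : ‖bCoeff g p x - bCoeff g p y‖ ≤
        Real.sqrt d * ((((Kg : ℝ) + Cg) * I) * ‖x - y‖) :=
      norm_le_of_coord _ _ (by positivity) hco
    calc ‖bCoeff g p x - bCoeff g p y‖
        ≤ Real.sqrt d * ((((Kg : ℝ) + Cg) * I) * ‖x - y‖) := h1
      _ = (Real.sqrt d * (((Kg : ℝ) + Cg) * I)) * ‖x - y‖ := by ring
      _ = (Real.toNNReal (Real.sqrt d * (((Kg : ℝ) + Cg) * I)) : ℝ) * ‖x - y‖ := by
          rw [Real.coe_toNNReal _ (by positivity)]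
  · -- bound on a
    intro x k l
    rw [hakl]
    exact aux_bound m m0 hmint _ Cg (hCg x x) _ (hqmeas x) (ppos x) (mbd x) _
      (hwmeas_a k l) (hwb_a k l)
  · positivity
  · -- Lipschitz of a
    intro x y k l
    rw [hakl, hakl]
    have := aux_lip m m0 hmint (grad1 g x x) (grad1 g y y) Cg (hCg x x) (hCg y y)
      ((Kg : ℝ) * ‖x - y‖) (hGlip x y) (fun h => p x h) (fun h => p y h)
      (hqmeas x) (hqmeas y) (ppos x) (ppos y) (mbd x) (mbd y)
      (‖x - y‖) (norm_nonneg _) (fun h => mlipp x y h) _ (hwmeas_a k l) (hwb_a k l)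
    calc |(∫ h : Euc d, (h k * h l) * max ⟪grad1 g x x, h⟫ 0 * p x h) -
          ∫ h : Euc d, (h k * h l) * max ⟪grad1 g y y, h⟫ 0 * p y h|
        ≤ ((Kg : ℝ) * ‖x - y‖ + Cg * ‖x - y‖) * I := this
      _ = (((Kg : ℝ) + Cg) * I) * ‖x - y‖ := by ring
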